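/- Let X be a σ-finite measure space, 1 ≤ p < ∞, and let E, G be L_p(X)-spaces. If τ : G → E is such that τ_∞ = 1_{L_p(X)} ⊗ τ maps the closed unit ball of L_p(X) ⊗ G onto the closed unit ball of L_p(X) ⊗ E, then τ_∞ restricted to L_p^0(X) ⊗ G maps its closed unit ball onto the closed unit ball of L_p^0(X) ⊗ E. -/

import Mathlib

open MeasureTheory
open scoped ENNReal

/-- The subspace `L_p^0(X)` of simple functions: the span in `L_p(X)` of the
(classes of) characteristic functions of finite-measure measurable sets. -/
noncomputable def Lp0Sub {X : Type*} [MeasurableSpace X] (μ : Measure X)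
    (p : ℝ≥0∞) [Fact (1 ≤ p)] : Submodule ℝ (Lp ℝ p μ) :=
  Submodule.span ℝ
    {f | ∃ (s : Set X) (hs : MeasurableSet s) (hμ : μ s ≠ ∞),
      f = indicatorConstLp p hs hμ (1 : ℝ)}

namespace Stmt16Aux

open Set

variable {X : Type*} [MeasurableSpace X] {μ : Measure X} {ι : Type*} [Fintype ι] [DecidableEq ι]

/-- The atom of the algebra generated by the `s i` corresponding to a sign pattern `σ`,
truncated to `∅` when no sign is positive (so that it has finite measure). -/
noncomputable def atomSet (s : ι → Set X) (σ : ι → Bool) : Set X :=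
  if ∃ i, σ i = true then ⋂ i, (if σ i then s i else (s i)ᶜ) else ∅

variable {s : ι → Set X}

theorem measurableSet_atomSet (hs : ∀ i, MeasurableSet (s i)) (σ : ι → Bool) :
    MeasurableSet (atomSet s σ) := by
  unfold atomSet
  split_ifs
  · exact MeasurableSet.iInter fun i => by
      by_cases h : σ i = true <;> simp [h, hs i, (hs i).compl]
  · exact MeasurableSet.empty

theorem spec_of_mem_atomSet {σ : ι → Bool} {x : X} (h : x ∈ atomSet s σ) (i : ι) :
    x ∈ s i ↔ σ i = true := by
  unfold atomSet at h
  split_ifs at h with hg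
  · rw [mem_iInter] at h
    have := h i
    cases hσ : σ i <;> simp [hσ] at this <;> simp [this, hσ]
  · exact absurd h (notMem_empty x)

theorem exists_mem_atomSet {x : X} {j : ι} (hxj : x ∈ s j) :
    ∃ σ : ι → Bool, σ j = true ∧ x ∈ atomSet s σ := by
  classical
  refine ⟨fun i => if x ∈ s i then true else false, by simp [hxj], ?_⟩
  unfold atomSet
  rw [if_pos ⟨j, by simp [hxj]⟩, mem_iInter]
  intro i
  by_cases h : x ∈ s i <;> simp [h]

theorem atomSet_subset {σ : ι → Bool} {i : ι} (h : σ i = true) : atomSet s σ ⊆ s i :=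
  fun _ hx => (spec_of_mem_atomSet hx i).2 h

theorem eq_of_mem_atomSet {σ σ' : ι → Bool} {x : X} (h : x ∈ atomSet s σ)
    (h' : x ∈ atomSet s σ') : σ = σ' := by
  funext i
  have h1 := spec_of_mem_atomSet h i
  have h2 := spec_of_mem_atomSet h' i
  by_cases hx : x ∈ s i
  · rw [h1.1 hx, h2.1 hx]
  · cases hσ : σ i <;> cases hσ' : σ' i <;> simp_all

theorem measure_atomSet_ne_top (hfin : ∀ i, μ (s i) ≠ ∞) (σ : ι → Bool) :
    μ (atomSet s σ) ≠ ∞ := by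
  by_cases h : ∃ i, σ i = true
  · obtain ⟨i, hi⟩ := h
    exact ne_top_of_le_ne_top (hfin i) (measure_mono (atomSet_subset hi))
  · rw [atomSet, if_neg h]
    simp

theorem pairwiseDisjoint_atomSet :
    Set.PairwiseDisjoint (Set.univ : Set (ι → Bool)) (atomSet s) := by
  intro σ _ σ' _ hne
  exact Set.disjoint_left.mpr fun x h h' => hne (eq_of_mem_atomSet h h')

/-- Average of `f` over `B`. -/
noncomputable def avg (μ : Measure X) (B : Set X) (f : X → ℝ) : ℝ :=
  (μ B).toReal⁻¹ * ∫ x in B, f x ∂μ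

variable (p : ℝ≥0∞) [Fact (1 ≤ p)]

theorem integrableOn_of_Lp (f : Lp ℝ p μ) {B : Set X} (hB : μ B ≠ ∞) :
    IntegrableOn (⇑f) B μ := by
  have h1 : MemLp f p (μ.restrict B) := (Lp.memLp f).restrict B
  haveI : IsFiniteMeasure (μ.restrict B) :=
    ⟨by rw [Measure.restrict_apply_univ]; exact hB.lt_top⟩
  exact h1.integrable Fact.out

theorem avg_add {B : Set X} (hB : μ B ≠ ∞) (f g : Lp ℝ p μ) :
    avg μ B ⇑(f + g) = avg μ B ⇑f + avg μ B ⇑g := by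
  unfold avg
  rw [← mul_add, ← integral_add (integrableOn_of_Lp p f hB) (integrableOn_of_Lp p g hB)]
  congr 1
  exact integral_congr_ae (ae_restrict_of_ae (Lp.coeFn_add f g))

theorem avg_smul {B : Set X} (c : ℝ) (f : Lp ℝ p μ) :
    avg μ B ⇑(c • f) = c * avg μ B ⇑f := by
  unfold avg
  rw [integral_congr_ae (ae_restrict_of_ae (Lp.coeFn_smul c f))]
  simp only [Pi.smul_apply, smul_eq_mul, integral_const_mul]
  ring

variable (s) in
/-- The conditional-expectation-like finite-rank operator. -/
noncomputable def projLM (μ : Measure X) (hs : ∀ i, MeasurableSet (s i))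
    (hfin : ∀ i, μ (s i) ≠ ∞) : Lp ℝ p μ →ₗ[ℝ] Lp ℝ p μ where
  toFun f := ∑ σ : ι → Bool, avg μ (atomSet s σ) ⇑f •
    indicatorConstLp p (measurableSet_atomSet hs σ) (measure_atomSet_ne_top hfin σ) (1 : ℝ)
  map_add' f g := by
    rw [← Finset.sum_add_distrib]
    refine Finset.sum_congr rfl fun σ _ => ?_
    rw [avg_add p (measure_atomSet_ne_top hfin σ) f g, add_smul]
  map_smul' c f := by
    rw [RingHom.id_apply, Finset.smul_sum]
    refine Finset.sum_congr rfl fun σ _ => ?_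
    rw [avg_smul p c f, mul_smul]

theorem coeFn_sum' {κ : Type*} (t : Finset κ) (F : κ → Lp ℝ p μ) :
    ⇑(∑ i ∈ t, F i) =ᵐ[μ] fun x => ∑ i ∈ t, F i x := by
  classical
  induction t using Finset.induction_on with
  | empty => simp only [Finset.sum_empty]; exact Lp.coeFn_zero ℝ p μ
  | insert _ _ hnotmem ih =>
    rename_i a t
    rw [Finset.sum_insert hnotmem]
    filter_upwards [Lp.coeFn_add (F a) (∑ i ∈ t, F i), ih] with x hx1 hx2
    rw [hx1]
    simp only [Pi.add_apply, hx2, Finset.sum_insert hnotmem]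

theorem projLM_coeFn (hs : ∀ i, MeasurableSet (s i)) (hfin : ∀ i, μ (s i) ≠ ∞)
    (f : Lp ℝ p μ) :
    ⇑(projLM s p μ hs hfin f) =ᵐ[μ]
      fun x => ∑ σ : ι → Bool, (atomSet s σ).indicator
        (fun _ => avg μ (atomSet s σ) ⇑f) x := by
  refine (coeFn_sum' p _ _).trans ?_
  have : ∀ σ : ι → Bool,
      ⇑(avg μ (atomSet s σ) ⇑f •
        indicatorConstLp p (measurableSet_atomSet hs σ) (measure_atomSet_ne_top hfin σ) (1 : ℝ))
      =ᵐ[μ] fun x => (atomSet s σ).indicator (fun _ => avg μ (atomSet s σ) ⇑f) x := by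
    intro σ
    filter_upwards [Lp.coeFn_smul (avg μ (atomSet s σ) ⇑f)
      (indicatorConstLp p (measurableSet_atomSet hs σ) (measure_atomSet_ne_top hfin σ) (1 : ℝ)),
      indicatorConstLp_coeFn (p := p) (hs := measurableSet_atomSet hs σ)
        (hμs := measure_atomSet_ne_top hfin σ) (c := (1 : ℝ))] with x hx1 hx2
    rw [hx1, Pi.smul_apply, hx2]
    by_cases hxB : x ∈ atomSet s σ <;> simp [hxB]
  filter_upwards [ae_all_iff.2 this] with x hx
  exact Finset.sum_congr rfl fun σ _ => hx σ

theorem holder_pow {B : Set X} {F : X → ℝ≥0∞} (hF : AEMeasurable F (μ.restrict B))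
    {r : ℝ} (hr : 1 ≤ r) :
    (∫⁻ x in B, F x ∂μ) ^ r ≤ μ B ^ (r - 1) * ∫⁻ x in B, F x ^ r ∂μ := by
  by_cases hr1 : r = 1
  · simp [hr1]
  have hr' : 1 < r := lt_of_le_of_ne hr (Ne.symm hr1)
  have hr0 : (0 : ℝ) < r := lt_trans one_pos hr'
  have hpq : r.HolderConjugate (Real.conjExponent r) := Real.HolderConjugate.conjExponent hr'
  have h := ENNReal.lintegral_mul_le_Lp_mul_Lq (μ.restrict B) hpq hF
    (aemeasurable_const (b := (1 : ℝ≥0∞)))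
  simp only [Pi.mul_apply, mul_one, ENNReal.one_rpow, lintegral_const,
    Measure.restrict_apply_univ, one_mul] at h
  have h2 := ENNReal.rpow_le_rpow h (le_of_lt hr0)
  rw [ENNReal.mul_rpow_of_nonneg _ _ (le_of_lt hr0), ← ENNReal.rpow_mul,
    ← ENNReal.rpow_mul] at h2
  have e1 : 1 / r * r = 1 := by field_simp
  have e2 : 1 / Real.conjExponent r * r = r - 1 := by
    unfold Real.conjExponent
    have : r - 1 ≠ 0 := by linarith
    field_simp
  rw [e1, e2, ENNReal.rpow_one] at h2
  calc (∫⁻ x in B, F x ∂μ) ^ r ≤ (∫⁻ x in B, F x ^ r ∂μ) * μ B ^ (r - 1) := h2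
    _ = μ B ^ (r - 1) * ∫⁻ x in B, F x ^ r ∂μ := mul_comm _ _

theorem atom_bound {B : Set X} (hB : MeasurableSet B) (hBfin : μ B ≠ ∞)
    (f : Lp ℝ p μ) {r : ℝ} (hr : 1 ≤ r) :
    ((‖avg μ B ⇑f‖₊ : ℝ≥0∞)) ^ r * μ B ≤ ∫⁻ x in B, ((‖f x‖₊ : ℝ≥0∞)) ^ r ∂μ := by
  have hr0 : (0 : ℝ) < r := lt_of_lt_of_le one_pos hr
  by_cases h0 : μ B = 0
  · rw [h0, mul_zero]; exact zero_le
  -- now 0 < μ B < ∞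
  have hint : IntegrableOn (⇑f) B μ := integrableOn_of_Lp p f hBfin
  set I : ℝ≥0∞ := ∫⁻ x in B, (‖f x‖₊ : ℝ≥0∞) ∂μ with hI
  have hItop : I ≠ ∞ := ne_of_lt hint.2
  have hinvtop : (μ B)⁻¹ ≠ ∞ := ENNReal.inv_ne_top.2 h0
  have h1 : ((‖avg μ B ⇑f‖₊ : ℝ≥0∞)) ≤ (μ B)⁻¹ * I := by
    have habs : |avg μ B ⇑f| ≤ (μ B).toReal⁻¹ * ∫ x in B, ‖f x‖ ∂μ := by
      rw [avg, abs_mul, abs_of_nonneg (inv_nonneg.2 ENNReal.toReal_nonneg)]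
      refine mul_le_mul_of_nonneg_left ?_ (inv_nonneg.2 ENNReal.toReal_nonneg)
      rw [← Real.norm_eq_abs]
      exact norm_integral_le_integral_norm _
    rw [show ((‖avg μ B ⇑f‖₊ : ℝ≥0∞)) = ENNReal.ofReal |avg μ B ⇑f| from Real.enorm_eq_ofReal_abs _]
    refine le_trans (ENNReal.ofReal_le_ofReal habs) (le_of_eq ?_)
    rw [ENNReal.ofReal_mul (inv_nonneg.2 ENNReal.toReal_nonneg)]
    congr 1
    · rw [← ENNReal.toReal_inv, ENNReal.ofReal_toReal hinvtop]
    · exact ofReal_integral_norm_eq_lintegral_enorm hint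
  have hF : AEMeasurable (fun x => ((‖f x‖₊ : ℝ≥0∞))) (μ.restrict B) :=
    ((Lp.aestronglyMeasurable f).restrict).enorm
  have h2 : I ^ r ≤ μ B ^ (r - 1) * ∫⁻ x in B, ((‖f x‖₊ : ℝ≥0∞)) ^ r ∂μ :=
    holder_pow hF hr
  set J : ℝ≥0∞ := ∫⁻ x in B, ((‖f x‖₊ : ℝ≥0∞)) ^ r ∂μ with hJ
  calc ((‖avg μ B ⇑f‖₊ : ℝ≥0∞)) ^ r * μ B
      ≤ ((μ B)⁻¹ * I) ^ r * μ B :=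
        mul_le_mul' (ENNReal.rpow_le_rpow h1 (le_of_lt hr0)) le_rfl
    _ = (μ B)⁻¹ ^ r * I ^ r * μ B := by
        rw [ENNReal.mul_rpow_of_nonneg _ _ (le_of_lt hr0)]
    _ ≤ (μ B)⁻¹ ^ r * (μ B ^ (r - 1) * J) * μ B := by
        exact mul_le_mul' (mul_le_mul' le_rfl h2) le_rfl
    _ = ((μ B)⁻¹ ^ r * (μ B ^ (r - 1) * μ B)) * J := by ring
    _ = J := by
        have h3 : μ B ^ (r - 1) * μ B = μ B ^ r := by
          nth_rewrite 2 [← ENNReal.rpow_one (μ B)]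
          rw [← ENNReal.rpow_add _ _ h0 hBfin]
          norm_num
        rw [h3, ENNReal.inv_rpow, ENNReal.inv_mul_cancel
          (ne_of_gt (ENNReal.rpow_pos (pos_iff_ne_zero.2 h0) hBfin))
          (ENNReal.rpow_ne_top_of_nonneg (le_of_lt hr0) hBfin), one_mul]

theorem projLM_mem (hs : ∀ i, MeasurableSet (s i)) (hfin : ∀ i, μ (s i) ≠ ∞)
    (f : Lp ℝ p μ) : projLM s p μ hs hfin f ∈ Lp0Sub μ p := by
  refine Submodule.sum_mem _ fun σ _ => Submodule.smul_mem _ _ (Submodule.subset_span ?_)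
  exact ⟨atomSet s σ, measurableSet_atomSet hs σ, measure_atomSet_ne_top hfin σ, rfl⟩

theorem projLM_fix (hs : ∀ i, MeasurableSet (s i)) (hfin : ∀ i, μ (s i) ≠ ∞) (j : ι) :
    projLM s p μ hs hfin (indicatorConstLp p (hs j) (hfin j) (1 : ℝ)) =
      indicatorConstLp p (hs j) (hfin j) (1 : ℝ) := by
  apply Lp.ext
  have havg : ∀ σ : ι → Bool,
      avg μ (atomSet s σ) ⇑(indicatorConstLp p (hs j) (hfin j) (1 : ℝ)) =
        (μ (atomSet s σ)).toReal⁻¹ * (μ (s j ∩ atomSet s σ)).toReal := by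
    intro σ
    unfold avg
    congr 1
    rw [setIntegral_indicatorConstLp (measurableSet_atomSet hs σ) (hs j) (hfin j) (1 : ℝ)]
    simp
    rfl
  have hN : μ (⋃ σ : {σ : ι → Bool // μ (atomSet s σ) = 0}, atomSet s σ.1) = 0 :=
    measure_iUnion_null fun σ => σ.2
  filter_upwards [projLM_coeFn p hs hfin (indicatorConstLp p (hs j) (hfin j) (1 : ℝ)),
    indicatorConstLp_coeFn (p := p) (hs := hs j) (hμs := hfin j) (c := (1 : ℝ)),
    measure_eq_zero_iff_ae_notMem.1 hN] with x hx1 hx2 hxN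
  rw [hx1, hx2]
  by_cases hxj : x ∈ s j
  · obtain ⟨σ₀, hσ₀j, hσ₀⟩ := exists_mem_atomSet hxj
    have hμ0 : μ (atomSet s σ₀) ≠ 0 := by
      intro h
      exact hxN (Set.mem_iUnion.2 ⟨⟨σ₀, h⟩, hσ₀⟩)
    rw [Set.indicator_of_mem hxj, Finset.sum_eq_single σ₀]
    · rw [Set.indicator_of_mem hσ₀, havg σ₀,
        Set.inter_eq_self_of_subset_right (atomSet_subset hσ₀j),
        inv_mul_cancel₀ (ENNReal.toReal_ne_zero.2 ⟨hμ0, measure_atomSet_ne_top hfin σ₀⟩)]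
    · intro σ _ hne
      exact Set.indicator_of_notMem (fun h => hne (eq_of_mem_atomSet h hσ₀)) _
    · exact fun h => absurd (Finset.mem_univ σ₀) h
  · rw [Set.indicator_of_notMem hxj]
    refine Finset.sum_eq_zero fun σ _ => ?_
    by_cases hxa : x ∈ atomSet s σ
    · have hσj : σ j ≠ true := fun h => hxj ((spec_of_mem_atomSet hxa j).2 h)
      have hinter : s j ∩ atomSet s σ = ∅ := by
        ext y
        simp only [Set.mem_inter_iff, Set.mem_empty_iff_false, iff_false, not_and]
        intro hyj hya
        exact hσj ((spec_of_mem_atomSet hya j).1 hyj)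
      rw [Set.indicator_of_mem hxa, havg σ, hinter]
      simp
    · exact Set.indicator_of_notMem hxa _

theorem eLpNorm_projLM_le (hp : p ≠ ∞) (hs : ∀ i, MeasurableSet (s i))
    (hfin : ∀ i, μ (s i) ≠ ∞) (f : Lp ℝ p μ) :
    eLpNorm (⇑(projLM s p μ hs hfin f)) p μ ≤ eLpNorm (⇑f) p μ := by
  have hp1 : (1 : ℝ≥0∞) ≤ p := Fact.out
  have hp0 : p ≠ 0 := fun h => by simp [h] at hp1
  set r : ℝ := p.toReal with hrdef
  have hr : 1 ≤ r := by
    have := ENNReal.toReal_mono hp hp1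
    simpa using this
  have hr0 : (0 : ℝ) < r := lt_of_lt_of_le one_pos hr
  rw [eLpNorm_congr_ae (projLM_coeFn p hs hfin f),
    eLpNorm_eq_lintegral_rpow_enorm_toReal hp0 hp, eLpNorm_eq_lintegral_rpow_enorm_toReal hp0 hp]
  refine ENNReal.rpow_le_rpow ?_ (by positivity)
  have hpt : ∀ x : X,
      ((‖∑ σ : ι → Bool, (atomSet s σ).indicator
        (fun _ => avg μ (atomSet s σ) ⇑f) x‖₊ : ℝ≥0∞)) ^ r =
      ∑ σ : ι → Bool, (atomSet s σ).indicator
        (fun _ => ((‖avg μ (atomSet s σ) ⇑f‖₊ : ℝ≥0∞)) ^ r) x := by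
    intro x
    by_cases hx : ∃ σ : ι → Bool, x ∈ atomSet s σ
    · obtain ⟨σ₀, hσ₀⟩ := hx
      rw [Finset.sum_eq_single σ₀
        (fun σ _ hne => Set.indicator_of_notMem
          (fun h => hne (eq_of_mem_atomSet h hσ₀)) _)
        (fun h => absurd (Finset.mem_univ σ₀) h),
        Finset.sum_eq_single σ₀
        (fun σ _ hne => Set.indicator_of_notMem
          (fun h => hne (eq_of_mem_atomSet h hσ₀)) _)
        (fun h => absurd (Finset.mem_univ σ₀) h),
        Set.indicator_of_mem hσ₀, Set.indicator_of_mem hσ₀]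
    · push_neg at hx
      rw [Finset.sum_eq_zero (fun σ _ => Set.indicator_of_notMem (hx σ) _),
        Finset.sum_eq_zero (fun σ _ => Set.indicator_of_notMem (hx σ) _)]
      simp [ENNReal.zero_rpow_of_pos hr0]
  calc ∫⁻ x, ((‖∑ σ : ι → Bool, (atomSet s σ).indicator
        (fun _ => avg μ (atomSet s σ) ⇑f) x‖₊ : ℝ≥0∞)) ^ r ∂μ
      = ∫⁻ x, ∑ σ : ι → Bool, (atomSet s σ).indicator
          (fun _ => ((‖avg μ (atomSet s σ) ⇑f‖₊ : ℝ≥0∞)) ^ r) x ∂μ :=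
        lintegral_congr hpt
    _ = ∑ σ : ι → Bool, ∫⁻ x, (atomSet s σ).indicator
          (fun _ => ((‖avg μ (atomSet s σ) ⇑f‖₊ : ℝ≥0∞)) ^ r) x ∂μ :=
        lintegral_finset_sum _ fun σ _ =>
          Measurable.indicator measurable_const (measurableSet_atomSet hs σ)
    _ = ∑ σ : ι → Bool, ((‖avg μ (atomSet s σ) ⇑f‖₊ : ℝ≥0∞)) ^ r * μ (atomSet s σ) := by
        refine Finset.sum_congr rfl fun σ _ => ?_
        rw [lintegral_indicator (measurableSet_atomSet hs σ), setLIntegral_const]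
    _ ≤ ∑ σ : ι → Bool, ∫⁻ x in atomSet s σ, ((‖f x‖₊ : ℝ≥0∞)) ^ r ∂μ :=
        Finset.sum_le_sum fun σ _ =>
          atom_bound p (measurableSet_atomSet hs σ) (measure_atomSet_ne_top hfin σ) f hr
    _ = ∫⁻ x in ⋃ σ ∈ (Finset.univ : Finset (ι → Bool)), atomSet s σ,
          ((‖f x‖₊ : ℝ≥0∞)) ^ r ∂μ := by
        rw [lintegral_biUnion_finset
          (by rw [Finset.coe_univ]; exact pairwiseDisjoint_atomSet)
          (fun σ _ => measurableSet_atomSet hs σ)]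
    _ ≤ ∫⁻ x, ((‖f x‖₊ : ℝ≥0∞)) ^ r ∂μ := setLIntegral_le_lintegral _ _

theorem norm_projLM_le (hp : p ≠ ∞) (hs : ∀ i, MeasurableSet (s i))
    (hfin : ∀ i, μ (s i) ≠ ∞) (f : Lp ℝ p μ) :
    ‖projLM s p μ hs hfin f‖ ≤ ‖f‖ := by
  rw [Lp.norm_def, Lp.norm_def]
  exact ENNReal.toReal_mono (Lp.eLpNorm_ne_top f) (eLpNorm_projLM_le p hp hs hfin f)

variable (μ) in
theorem exists_proj (hp : p ≠ ∞) (s : ι → Set X) (hs : ∀ i, MeasurableSet (s i))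
    (hfin : ∀ i, μ (s i) ≠ ∞) :
    ∃ a : Lp ℝ p μ →L[ℝ] Lp ℝ p μ, ‖a‖ ≤ 1 ∧ (∀ f, a f ∈ Lp0Sub μ p) ∧
      ∀ i, a (indicatorConstLp p (hs i) (hfin i) (1 : ℝ)) =
        indicatorConstLp p (hs i) (hfin i) (1 : ℝ) := by
  refine ⟨LinearMap.mkContinuous (projLM s p μ hs hfin) 1
    (fun f => by rw [one_mul]; exact norm_projLM_le p hp hs hfin f), ?_, ?_, ?_⟩
  · exact LinearMap.mkContinuous_norm_le _ zero_le_one _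
  · exact fun f => projLM_mem p hs hfin f
  · exact fun i => projLM_fix p hs hfin i

end Stmt16Aux

/-- Let `E, G` be `L_p(X)`-spaces, `1 ≤ p < ∞`, `X` σ-finite. If
`τ_∞ = 1 ⊗ τ` maps the closed unit ball of `L_p(X) ⊗ G` onto the closed unit ball of
`L_p(X) ⊗ E`, then its restriction maps the closed unit ball of `L_p^0(X) ⊗ G` onto
the closed unit ball of `L_p^0(X) ⊗ E`. -/
theorem stmt16 {X : Type*} [MeasurableSpace X] (μ : Measure X) [SigmaFinite μ]
    (p : ℝ≥0∞) [Fact (1 ≤ p)] (hp : p ≠ ∞)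
    {G E : Type*} [AddCommGroup G] [Module ℝ G] [AddCommGroup E] [Module ℝ E]
    (NG : TensorProduct ℝ (Lp ℝ p μ) G → ℝ) (NE : TensorProduct ℝ (Lp ℝ p μ) E → ℝ)
    (hGadd : ∀ u v, NG (u + v) ≤ NG u + NG v)
    (hGsmul : ∀ (c : ℝ) u, NG (c • u) = |c| * NG u)
    (hGdef : ∀ u, NG u = 0 ↔ u = 0)
    (hGcontr : ∀ (a : Lp ℝ p μ →L[ℝ] Lp ℝ p μ) u,
      NG (LinearMap.rTensor G (a : Lp ℝ p μ →ₗ[ℝ] Lp ℝ p μ) u) ≤ ‖a‖ * NG u)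
    (hEadd : ∀ u v, NE (u + v) ≤ NE u + NE v)
    (hEsmul : ∀ (c : ℝ) u, NE (c • u) = |c| * NE u)
    (hEdef : ∀ u, NE u = 0 ↔ u = 0)
    (hEcontr : ∀ (a : Lp ℝ p μ →L[ℝ] Lp ℝ p μ) u,
      NE (LinearMap.rTensor E (a : Lp ℝ p μ →ₗ[ℝ] Lp ℝ p μ) u) ≤ ‖a‖ * NE u)
    (τ : G →ₗ[ℝ] E)
    (honto : ∀ u, NE u ≤ 1 → ∃ v, NG v ≤ 1 ∧ LinearMap.lTensor (Lp ℝ p μ) τ v = u) :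
    ∀ u, u ∈ LinearMap.range (LinearMap.rTensor E (Lp0Sub μ p).subtype) → NE u ≤ 1 →
      ∃ v, v ∈ LinearMap.range (LinearMap.rTensor G (Lp0Sub μ p).subtype) ∧ NG v ≤ 1 ∧
        LinearMap.lTensor (Lp ℝ p μ) τ v = u := by
  classical
  intro u hu hNE
  obtain ⟨u₀, rfl⟩ := hu
  obtain ⟨S, hS⟩ := TensorProduct.exists_finset u₀
  -- for each summand, a finite set of generators spanning it
  have hmem : ∀ q : (Lp0Sub μ p) × E, q ∈ S → ∃ T : Finset (Lp ℝ p μ),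
      (↑T : Set (Lp ℝ p μ)) ⊆ {f | ∃ (s : Set X) (hs : MeasurableSet s) (hμ : μ s ≠ ∞),
        f = indicatorConstLp p hs hμ (1 : ℝ)} ∧
      (q.1 : Lp ℝ p μ) ∈ Submodule.span ℝ (↑T : Set (Lp ℝ p μ)) := by
    intro q _
    exact Submodule.mem_span_finite_of_mem_span q.1.2
  choose T hT1 hT2 using hmem
  set T0 : Finset (Lp ℝ p μ) := S.attach.biUnion (fun q => T q.1 q.2) with hT0
  have hgen : ∀ t : {x // x ∈ T0}, ∃ (s : Set X) (hs : MeasurableSet s) (hμ : μ s ≠ ∞),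
      (t : Lp ℝ p μ) = indicatorConstLp p hs hμ (1 : ℝ) := by
    rintro ⟨t, ht⟩
    rw [hT0, Finset.mem_biUnion] at ht
    obtain ⟨q, hq, htq⟩ := ht
    exact hT1 q.1 q.2 htq
  choose sSet hsMeas hsFin hEq using hgen
  obtain ⟨a, ha1, haMem, haFix⟩ := Stmt16Aux.exists_proj μ p hp sSet hsMeas hsFin
  -- a fixes every element of the span of T0
  have haFixT : ∀ t ∈ T0, a t = t := by
    intro t ht
    have h := haFix ⟨t, ht⟩
    rw [← hEq ⟨t, ht⟩] at h
    exact h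
  have haSpan : ∀ x ∈ Submodule.span ℝ (↑T0 : Set (Lp ℝ p μ)), a x = x := by
    intro x hx
    induction hx using Submodule.span_induction with
    | mem t ht => exact haFixT t ht
    | zero => exact map_zero a
    | add y z _ _ hy hz => rw [map_add, hy, hz]
    | smul c y _ hy => rw [ContinuousLinearMap.map_smul, hy]
  have hfixq : ∀ q ∈ S, a (q.1 : Lp ℝ p μ) = (q.1 : Lp ℝ p μ) := by
    intro q hq
    refine haSpan _ (Submodule.span_mono ?_ (hT2 q hq))
    intro x hx
    exact Finset.mem_coe.2 (Finset.mem_biUnion.2 ⟨⟨q, hq⟩, S.mem_attach _, hx⟩)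
  set u := LinearMap.rTensor E (Lp0Sub μ p).subtype u₀ with hu'
  have hau : LinearMap.rTensor E (a : Lp ℝ p μ →ₗ[ℝ] Lp ℝ p μ) u = u := by
    rw [hu', hS, map_sum, map_sum]
    refine Finset.sum_congr rfl fun q hq => ?_
    rw [LinearMap.rTensor_tmul, LinearMap.rTensor_tmul, Submodule.coe_subtype]
    congr 1
    exact hfixq q hq
  obtain ⟨v, hv1, hv2⟩ := honto u hNE
  have hNGv : 0 ≤ NG v := by
    have h0 : NG 0 = 0 := by
      have := hGsmul 0 0
      simpa using this
    have hneg : NG (-v) = NG v := by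
      have := hGsmul (-1) v
      simpa using this
    have := hGadd v (-v)
    rw [add_neg_cancel, h0, hneg] at this
    linarith
  refine ⟨LinearMap.rTensor G (a : Lp ℝ p μ →ₗ[ℝ] Lp ℝ p μ) v, ?_, ?_, ?_⟩
  · -- membership in the range of the Lp0 inclusion
    set a₀ : Lp ℝ p μ →ₗ[ℝ] (Lp0Sub μ p) :=
      LinearMap.codRestrict (Lp0Sub μ p) (a : Lp ℝ p μ →ₗ[ℝ] Lp ℝ p μ) haMem with ha₀
    refine ⟨LinearMap.rTensor G a₀ v, ?_⟩
    rw [← LinearMap.comp_apply, ← LinearMap.rTensor_comp, ha₀,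
      LinearMap.subtype_comp_codRestrict]
  · calc NG (LinearMap.rTensor G (a : Lp ℝ p μ →ₗ[ℝ] Lp ℝ p μ) v) ≤ ‖a‖ * NG v :=
        hGcontr a v
      _ ≤ 1 * NG v := mul_le_mul_of_nonneg_right ha1 hNGv
      _ = NG v := one_mul _
      _ ≤ 1 := hv1
  · have hcomm : LinearMap.lTensor (Lp ℝ p μ) τ
        (LinearMap.rTensor G (a : Lp ℝ p μ →ₗ[ℝ] Lp ℝ p μ) v) =
        LinearMap.rTensor E (a : Lp ℝ p μ →ₗ[ℝ] Lp ℝ p μ)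
          (LinearMap.lTensor (Lp ℝ p μ) τ v) := by
      rw [← LinearMap.comp_apply, ← LinearMap.comp_apply,
        LinearMap.lTensor_comp_rTensor, LinearMap.rTensor_comp_lTensor]
    rw [hcomm, hv2, hau]
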